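/- Define f(x) := −c·x + R·(x − b)/(1 − α + α·(x − b)) for x ≥ b, and set x̄ := b − (1−α)/α + √((1−α)·R/(α²·c)). Then f is strictly increasing on [b, x̄] (when x̄ ≥ b) and strictly decreasing on [max(b, x̄), ∞); moreover, if x̄ ≥ b, then f(x̄) = (1/α)·[(√R − √((1−α)·c))² − α·b·c]. -/

import Mathlib

set_option maxHeartbeats 1000000 in
/-- Let `α ∈ (0,1)`, `c > 0`, `R > 0`, `b ∈ ℝ`.  Define
`f x := −c·x + R·(x−b)/(1−α+α·(x−b))` and
`x̄ := b − (1−α)/α + √((1−α)·R/(α²·c))`.  Then `f` is strictly increasing on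
`[b, x̄]` (when `x̄ ≥ b`), strictly decreasing on `[max b x̄, ∞)`, and if
`x̄ ≥ b` then `f x̄ = (1/α)·[(√R − √((1−α)·c))² − α·b·c]`. -/
theorem middle_piece_shape
    (α c R b : ℝ) (hα0 : 0 < α) (hα1 : α < 1) (hc : 0 < c) (hR : 0 < R) :
    (b ≤ b - (1 - α) / α + Real.sqrt ((1 - α) * R / (α ^ 2 * c)) →
      StrictMonoOn (fun x => -c * x + R * (x - b) / (1 - α + α * (x - b)))
        (Set.Icc b (b - (1 - α) / α + Real.sqrt ((1 - α) * R / (α ^ 2 * c))))) ∧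
    StrictAntiOn (fun x => -c * x + R * (x - b) / (1 - α + α * (x - b)))
      (Set.Ici (max b (b - (1 - α) / α + Real.sqrt ((1 - α) * R / (α ^ 2 * c))))) ∧
    (b ≤ b - (1 - α) / α + Real.sqrt ((1 - α) * R / (α ^ 2 * c)) →
      (fun x => -c * x + R * (x - b) / (1 - α + α * (x - b)))
          (b - (1 - α) / α + Real.sqrt ((1 - α) * R / (α ^ 2 * c)))
        = (1 / α) * ((Real.sqrt R - Real.sqrt ((1 - α) * c)) ^ 2 - α * b * c)) := by
  have h1α : (0:ℝ) < 1 - α := by linarith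
  set s := Real.sqrt ((1 - α) * R / (α ^ 2 * c)) with hs
  have hsnn : 0 ≤ s := Real.sqrt_nonneg _
  have hs2 : s ^ 2 = (1 - α) * R / (α ^ 2 * c) := Real.sq_sqrt (by positivity)
  have hkey : α ^ 2 * c * s ^ 2 = (1 - α) * R := by
    rw [hs2]; field_simp
  set f : ℝ → ℝ := fun x => -c * x + R * (x - b) / (1 - α + α * (x - b)) with hf
  set xb := b - (1 - α) / α + s with hxb
  have hDxb : ∀ x : ℝ, (1 - α + α * (x - b)) - α * s = α * (x - xb) := by
    intro x; rw [hxb]; field_simp; ring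
  have hderiv : ∀ x : ℝ, 1 - α + α * (x - b) ≠ 0 →
      HasDerivAt f (-c + R * (1 - α) / (1 - α + α * (x - b)) ^ 2) x := by
    intro x hx
    have h1 : HasDerivAt (fun x : ℝ => -c * x) (-c) x := by
      simpa using (hasDerivAt_id x).const_mul (-c)
    have h2 : HasDerivAt (fun x : ℝ => R * (x - b)) R x := by
      simpa using ((hasDerivAt_id x).sub_const b).const_mul R
    have h3 : HasDerivAt (fun x : ℝ => 1 - α + α * (x - b)) α x := by
      simpa using (((hasDerivAt_id x).sub_const b).const_mul α).const_add (1 - α)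
    have h4 := h1.add (h2.div h3 hx)
    convert h4 using 1
    · rfl
    · rfl
    · rfl
    ring
  have hDpos : ∀ x : ℝ, b ≤ x → 0 < 1 - α + α * (x - b) := by
    intro x hx
    have : 0 ≤ α * (x - b) := by
      have : 0 ≤ x - b := by linarith
      positivity
    linarith
  refine ⟨?_, ?_, ?_⟩
  · intro hbx
    apply strictMonoOn_of_deriv_pos (convex_Icc _ _)
    · intro x hx
      exact (hderiv x (ne_of_gt (hDpos x hx.1))).continuousAt.continuousWithinAt
    · intro x hx
      rw [interior_Icc] at hx
      have hDp := hDpos x hx.1.le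
      rw [(hderiv x (ne_of_gt hDp)).deriv]
      set D := 1 - α + α * (x - b) with hD
      have hlt : D < α * s := by
        have := hDxb x
        nlinarith [hx.2]
      have hD2 : D ^ 2 < α ^ 2 * s ^ 2 := by
        nlinarith [mul_self_lt_mul_self hDp.le hlt]
      have hD2p : 0 < D ^ 2 := by positivity
      have : c < R * (1 - α) / D ^ 2 := by
        rw [lt_div_iff₀ hD2p]; nlinarith
      linarith
  · apply strictAntiOn_of_deriv_neg (convex_Ici _)
    · intro x hx
      have hxb' : b ≤ x := le_trans (le_max_left _ _) hx
      exact (hderiv x (ne_of_gt (hDpos x hxb'))).continuousAt.continuousWithinAt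
    · intro x hx
      rw [interior_Ici] at hx
      have hxb' : b < x := lt_of_le_of_lt (le_max_left _ _) hx
      have hDp := hDpos x hxb'.le
      rw [(hderiv x (ne_of_gt hDp)).deriv]
      set D := 1 - α + α * (x - b) with hD
      have hgt : α * s < D := by
        have h1 := hDxb x
        have h2 : xb < x := lt_of_le_of_lt (le_max_right _ _) hx
        nlinarith
      have hD2 : α ^ 2 * s ^ 2 < D ^ 2 := by
        nlinarith [mul_self_lt_mul_self (mul_nonneg hα0.le hsnn) hgt]
      have hc2 : (1 - α) * R < c * D ^ 2 := by nlinarith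
      have hD2p : 0 < D ^ 2 := by positivity
      have : R * (1 - α) / D ^ 2 < c := by
        rw [div_lt_iff₀ hD2p]; nlinarith
      linarith
  · intro hbx
    have hspos : 0 < s := by
      by_contra h
      push_neg at h
      have : s = 0 := le_antisymm h hsnn
      rw [hxb, this] at hbx
      have : (1 - α) / α > 0 := by positivity
      linarith
    have hD : 1 - α + α * (xb - b) = α * s := by
      have := hDxb xb
      linarith
    show -c * xb + R * (xb - b) / (1 - α + α * (xb - b)) = _
    clear_value s xb f
    clear hs hs2 hf hDxb hderiv hDpos hbx
    rw [hD]
    have h1 : (α * c * s) ^ 2 = R * ((1 - α) * c) := by nlinarith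
    have hsc : Real.sqrt R * Real.sqrt ((1 - α) * c) = α * c * s := by
      rw [← Real.sqrt_mul hR.le, ← h1, Real.sqrt_sq (by positivity)]
    have hexp : (Real.sqrt R - Real.sqrt ((1 - α) * c)) ^ 2
        = R - 2 * (α * c * s) + (1 - α) * c := by
      have hr : Real.sqrt R ^ 2 = R := Real.sq_sqrt hR.le
      have hq : Real.sqrt ((1 - α) * c) ^ 2 = (1 - α) * c := Real.sq_sqrt (by positivity)
      linear_combination hr + hq - 2 * hsc
    rw [hexp, hxb]
    have hα' : α ≠ 0 := ne_of_gt hα0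
    have hs' : s ≠ 0 := ne_of_gt hspos
    field_simp
    ring_nf
    nlinarith [hkey]
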